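/- Let W be a real Hilbert space and let A and B be finite-dimensional subspaces of W with dim A = dim B. Then δ(A, B) = δ(B, A), where δ(A, B) := sup { ‖x − P_B x‖ : x ∈ A, ‖x‖ = 1 } (with δ(A, B) := 0 if A = {0}) and P_B denotes the orthogonal projection of W onto B. -/

import Mathlib

open Module

section KatoAbstract

variable {E F : Type*} [NormedAddCommGroup E] [InnerProductSpace ℝ E]
  [NormedAddCommGroup F] [InnerProductSpace ℝ F]

private lemma katoAux_adjoint_lb [CompleteSpace E] [CompleteSpace F]
    (T : E →L[ℝ] F) (hsurj : Function.Surjective T) {c : ℝ}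
    (hc : ∀ z, c * ‖z‖ ≤ ‖T z‖) {y : F} (hy : ‖y‖ = 1) :
    c ≤ ‖(ContinuousLinearMap.adjoint T) y‖ := by
  rcases le_or_gt c 0 with h | h
  · exact h.trans (norm_nonneg _)
  obtain ⟨x, hx⟩ := hsurj y
  have hxne : x ≠ 0 := by
    rintro rfl
    rw [map_zero] at hx
    rw [← hx, norm_zero] at hy
    norm_num at hy
  have hxpos : (0 : ℝ) < ‖x‖ := norm_pos_iff.2 hxne
  have h1 : c * ‖x‖ ≤ 1 := by
    have := hc x; rwa [hx, hy] at this
  have h2 : (1 : ℝ) ≤ ‖(ContinuousLinearMap.adjoint T) y‖ * ‖x‖ := by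
    have hinner : inner ℝ ((ContinuousLinearMap.adjoint T) y) x = inner ℝ y (T x) :=
      ContinuousLinearMap.adjoint_inner_left T x y
    have : inner ℝ y (T x) = 1 := by
      rw [hx, real_inner_self_eq_norm_sq, hy]; norm_num
    calc (1 : ℝ) = inner ℝ ((ContinuousLinearMap.adjoint T) y) x := by rw [hinner, this]
      _ ≤ ‖(ContinuousLinearMap.adjoint T) y‖ * ‖x‖ := real_inner_le_norm _ _
  have := h1.trans h2
  exact le_of_mul_le_mul_right this hxpos

private lemma katoStep [FiniteDimensional ℝ E] [FiniteDimensional ℝ F]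
    (T : E →L[ℝ] F) (hdim : finrank ℝ E = finrank ℝ F)
    {x₀ : E} (hmin : ∀ x : E, ‖x‖ = 1 → ‖T x₀‖ ≤ ‖T x‖)
    (hpos : 0 < ‖T x₀‖) {y : F} (hy : ‖y‖ = 1) :
    ‖T x₀‖ ≤ ‖(ContinuousLinearMap.adjoint T) y‖ := by
  have hc : ∀ z, ‖T x₀‖ * ‖z‖ ≤ ‖T z‖ := by
    intro z
    rcases eq_or_ne z 0 with rfl | hz
    · simp
    · have hzn : (0 : ℝ) < ‖z‖ := norm_pos_iff.2 hz
      have hunit : ‖(‖z‖⁻¹ • z)‖ = 1 := by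
        rw [norm_smul, norm_inv, norm_norm, inv_mul_cancel₀ hzn.ne']
      have h1 := hmin _ hunit
      rw [map_smul, norm_smul, norm_inv, norm_norm] at h1
      rw [← mul_le_mul_iff_left₀ (inv_pos.2 hzn)]
      calc ‖T x₀‖ * ‖z‖ * ‖z‖⁻¹ = ‖T x₀‖ := by field_simp
        _ ≤ ‖z‖⁻¹ * ‖T z‖ := h1
        _ = ‖T z‖ * ‖z‖⁻¹ := by ring
  have hinj : Function.Injective T := by
    intro a b hab
    by_contra hne
    have hab' : a - b ≠ 0 := sub_ne_zero.2 hne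
    have h0 := hc (a - b)
    rw [map_sub, hab, sub_self, norm_zero] at h0
    nlinarith [norm_pos_iff.2 hab']
  have hsurj : Function.Surjective T :=
    (LinearMap.injective_iff_surjective_of_finrank_eq_finrank hdim).1 hinj
  exact katoAux_adjoint_lb T hsurj hc hy

private lemma katoMinEq [FiniteDimensional ℝ E] [FiniteDimensional ℝ F]
    (T : E →L[ℝ] F) (hdim : finrank ℝ E = finrank ℝ F)
    {x₀ : E} {y₀ : F} (hx₀ : ‖x₀‖ = 1) (hy₀ : ‖y₀‖ = 1)
    (hminT : ∀ x : E, ‖x‖ = 1 → ‖T x₀‖ ≤ ‖T x‖)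
    (hminS : ∀ y : F, ‖y‖ = 1 →
      ‖(ContinuousLinearMap.adjoint T) y₀‖ ≤ ‖(ContinuousLinearMap.adjoint T) y‖) :
    ‖T x₀‖ = ‖(ContinuousLinearMap.adjoint T) y₀‖ := by
  have h1 : 0 < ‖T x₀‖ → ‖T x₀‖ ≤ ‖(ContinuousLinearMap.adjoint T) y₀‖ := fun h =>
    katoStep T hdim hminT h hy₀
  have h2 : 0 < ‖(ContinuousLinearMap.adjoint T) y₀‖ →
      ‖(ContinuousLinearMap.adjoint T) y₀‖ ≤ ‖T x₀‖ := by
    intro h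
    have := katoStep (ContinuousLinearMap.adjoint T) hdim.symm hminS h hx₀
    rwa [ContinuousLinearMap.adjoint_adjoint] at this
  rcases (norm_nonneg (T x₀)).lt_or_eq with h | h
  · exact le_antisymm (h1 h) (h2 (lt_of_lt_of_le h (h1 h)))
  · rcases (norm_nonneg ((ContinuousLinearMap.adjoint T) y₀)).lt_or_eq with h' | h'
    · linarith [h2 h']
    · rw [← h, ← h']

end KatoAbstract

/-- The gap `δ(A, B) = sup { ‖x − P_B x‖ : x ∈ A, ‖x‖ = 1 }` between two
subspaces of a real inner product space (equal to `0` when `A = {0}`, since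
`sSup ∅ = 0` in `ℝ`). -/
noncomputable def subspaceGap {W : Type*} [NormedAddCommGroup W] [InnerProductSpace ℝ W]
    (A B : Submodule ℝ W) [B.HasOrthogonalProjection] : ℝ :=
  sSup {r : ℝ | ∃ x ∈ A, ‖x‖ = 1 ∧ r = ‖x - (B.orthogonalProjectionOnto x : W)‖}

section KatoGap

variable {W : Type*} [NormedAddCommGroup W] [InnerProductSpace ℝ W]

/-- Pythagoras for the orthogonal projection. -/
private lemma katoPyth (B : Submodule ℝ W) [B.HasOrthogonalProjection] (v : W) :
    ‖v - (B.orthogonalProjectionOnto v : W)‖ ^ 2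
      = ‖v‖ ^ 2 - ‖(B.orthogonalProjectionOnto v : W)‖ ^ 2 := by
  have horth : inner ℝ ((B.orthogonalProjectionOnto v : W))
      (v - (B.orthogonalProjectionOnto v : W)) = 0 := by
    rw [real_inner_comm]
    simpa only [Submodule.starProjection_apply] using B.starProjection_inner_eq_zero v _ (B.orthogonalProjectionOnto v).2
  have hdecomp : v = (B.orthogonalProjectionOnto v : W) + (v - (B.orthogonalProjectionOnto v : W)) := by
    abel
  have := norm_add_sq_real (B.orthogonalProjectionOnto v : W) (v - (B.orthogonalProjectionOnto v : W))
  rw [← hdecomp, horth] at this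
  linarith

private lemma katoNormSub (B : Submodule ℝ W) [B.HasOrthogonalProjection] {v : W}
    (hv : ‖v‖ = 1) :
    ‖v - (B.orthogonalProjectionOnto v : W)‖
      = Real.sqrt (1 - ‖(B.orthogonalProjectionOnto v : W)‖ ^ 2) := by
  have h := katoPyth B v
  rw [hv, one_pow] at h
  rw [← h, Real.sqrt_sq (norm_nonneg _)]

/-- The gap equals `√(1 - c²)` where `c` is the minimal norm of the projection of a unit
vector of `A` onto `B`. -/
private lemma katoGap (A B : Submodule ℝ W) [B.HasOrthogonalProjection]
    {x₀ : A} (hx₀ : ‖x₀‖ = 1)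
    (hmin : ∀ x : A, ‖x‖ = 1 →
      ‖(B.orthogonalProjectionOnto (x₀ : W) : W)‖ ≤ ‖(B.orthogonalProjectionOnto (x : W) : W)‖) :
    subspaceGap A B = Real.sqrt (1 - ‖(B.orthogonalProjectionOnto (x₀ : W) : W)‖ ^ 2) := by
  have hx₀W : ‖(x₀ : W)‖ = 1 := hx₀
  apply IsGreatest.csSup_eq
  constructor
  · exact ⟨(x₀ : W), x₀.2, hx₀W, (katoNormSub B hx₀W).symm⟩
  · rintro r ⟨x, hxA, hx1, rfl⟩
    have hxW : ‖(⟨x, hxA⟩ : A)‖ = 1 := hx1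
    rw [katoNormSub B hx1]
    apply Real.sqrt_le_sqrt
    have := hmin ⟨x, hxA⟩ hxW
    have h0 : (0 : ℝ) ≤ ‖(B.orthogonalProjectionOnto (x₀ : W) : W)‖ := norm_nonneg _
    nlinarith

end KatoGap

/-- **Kato's lemma (symmetry of the gap).**
For finite-dimensional subspaces `A`, `B` of a real Hilbert space with
`dim A = dim B`, one has `δ(A, B) = δ(B, A)`. -/
theorem subspaceGap_symm
    {W : Type*} [NormedAddCommGroup W] [InnerProductSpace ℝ W] [CompleteSpace W]
    (A B : Submodule ℝ W) [FiniteDimensional ℝ A] [FiniteDimensional ℝ B]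
    (hdim : Module.finrank ℝ A = Module.finrank ℝ B) :
    subspaceGap A B = subspaceGap B A := by
  by_cases hA : A = ⊥
  · have hB : B = ⊥ := by
      rw [← Submodule.finrank_eq_zero (R := ℝ), ← hdim, hA, finrank_bot]
    subst hA; subst hB; rfl
  · have hB : B ≠ ⊥ := by
      intro h
      exact hA (by rw [← Submodule.finrank_eq_zero (R := ℝ), hdim, h, finrank_bot])
    have : Nontrivial A := Submodule.nontrivial_iff_ne_bot.2 hA
    have : Nontrivial B := Submodule.nontrivial_iff_ne_bot.2 hB
    set T : A →L[ℝ] B := B.orthogonalProjectionOnto.comp A.subtypeL with hT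
    have hadj : A.orthogonalProjectionOnto.comp B.subtypeL = ContinuousLinearMap.adjoint T := by
      rw [ContinuousLinearMap.eq_adjoint_iff]
      intro y x
      simp [hT, Submodule.coe_inner]
    set S : B →L[ℝ] A := ContinuousLinearMap.adjoint T with hS
    -- minimizer on the unit sphere of `A`
    obtain ⟨x₀, hx₀mem, hx₀min⟩ := (isCompact_sphere (0 : A) 1).exists_isMinOn
      (NormedSpace.sphere_nonempty.2 zero_le_one) (T.continuous.norm.continuousOn)
    obtain ⟨y₀, hy₀mem, hy₀min⟩ := (isCompact_sphere (0 : B) 1).exists_isMinOn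
      (NormedSpace.sphere_nonempty.2 zero_le_one) (S.continuous.norm.continuousOn)
    have hx₀norm : ‖x₀‖ = 1 := mem_sphere_zero_iff_norm.1 hx₀mem
    have hy₀norm : ‖y₀‖ = 1 := mem_sphere_zero_iff_norm.1 hy₀mem
    have hminT : ∀ x : A, ‖x‖ = 1 → ‖T x₀‖ ≤ ‖T x‖ := fun x hx =>
      hx₀min (mem_sphere_zero_iff_norm.2 hx)
    have hminS : ∀ y : B, ‖y‖ = 1 → ‖S y₀‖ ≤ ‖S y‖ := fun y hy =>
      hy₀min (mem_sphere_zero_iff_norm.2 hy)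
    have hSy : ∀ y : B, S y = A.orthogonalProjectionOnto (y : W) := fun y =>
      (DFunLike.congr_fun hadj y).symm
    have hmin1 : ∀ x : A, ‖x‖ = 1 →
        ‖(B.orthogonalProjectionOnto (x₀ : W) : W)‖ ≤ ‖(B.orthogonalProjectionOnto (x : W) : W)‖ := by
      intro x hx
      exact hminT x hx
    have hmin2 : ∀ y : B, ‖y‖ = 1 →
        ‖(A.orthogonalProjectionOnto (y₀ : W) : W)‖ ≤ ‖(A.orthogonalProjectionOnto (y : W) : W)‖ := by
      intro y hy
      have := hminS y hy
      rwa [hSy, hSy] at this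
    rw [katoGap A B hx₀norm hmin1, katoGap B A hy₀norm hmin2]
    have hkey : ‖T x₀‖ = ‖S y₀‖ := katoMinEq T hdim hx₀norm hy₀norm hminT hminS
    have h1 : ‖(B.orthogonalProjectionOnto (x₀ : W) : W)‖ = ‖T x₀‖ := rfl
    have h2 : ‖(A.orthogonalProjectionOnto (y₀ : W) : W)‖ = ‖S y₀‖ := by rw [hSy]; rfl
    rw [h1, h2, hkey]
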